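/- Let x₁,…,x_t, x'₁,…,x'_t ∈ ℝ^d with Σᵢ ‖x'ᵢ − xᵢ‖₂² ≤ ε² and Σᵢ ‖xᵢ‖₂² ≤ t·d. Let G_t = (1/t)Σᵢ xᵢxᵢᵀ and G'_t = (1/t)Σᵢ x'ᵢx'ᵢᵀ. Then ‖G'_t − G_t‖₂ ≤ ε²/t + 2ε√d/√t, where ‖·‖₂ is the spectral norm. -/

import Mathlib

open scoped BigOperators

/-- Euclidean norm of a vector in `Fin n → ℝ`. -/
noncomputable def vecEnorm {n : ℕ} (v : Fin n → ℝ) : ℝ :=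
  Real.sqrt (∑ i, (v i) ^ 2)

/-- Spectral norm of a square real matrix, as the supremum of `‖M v‖` over
unit vectors `v`. -/
noncomputable def sNorm {d : ℕ} (M : Matrix (Fin d) (Fin d) ℝ) : ℝ :=
  ⨆ v : {v : Fin d → ℝ // vecEnorm v = 1}, vecEnorm (M.mulVec v.1)


noncomputable def toE {n : ℕ} : (Fin n → ℝ) ≃ₗ[ℝ] EuclideanSpace ℝ (Fin n) :=
  (WithLp.linearEquiv 2 ℝ (Fin n → ℝ)).symm

lemma vecEnorm_eq {n : ℕ} (v : Fin n → ℝ) : vecEnorm v = ‖toE v‖ := by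
  simp [vecEnorm, toE, EuclideanSpace.norm_eq, sq_abs]

lemma vecEnorm_nonneg' {n : ℕ} (v : Fin n → ℝ) : 0 ≤ vecEnorm v := Real.sqrt_nonneg _

lemma vecEnorm_cs {n : ℕ} (a b : Fin n → ℝ) : |∑ j, a j * b j| ≤ vecEnorm a * vecEnorm b := by
  have := abs_real_inner_le_norm (toE a) (toE b)
  have h2 : (inner ℝ (toE a) (toE b) : ℝ) = ∑ j, a j * b j := by
    simp [toE, PiLp.inner_apply, RCLike.inner_apply, conj_trivial, mul_comm]
  rw [h2] at this
  simpa [vecEnorm_eq] using this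

lemma vecEnorm_smul' {n : ℕ} (c : ℝ) (v : Fin n → ℝ) : vecEnorm (c • v) = |c| * vecEnorm v := by
  rw [vecEnorm_eq, vecEnorm_eq, map_smul, norm_smul, Real.norm_eq_abs]

lemma vecEnorm_add_le {n : ℕ} (a b : Fin n → ℝ) : vecEnorm (a + b) ≤ vecEnorm a + vecEnorm b := by
  rw [vecEnorm_eq, vecEnorm_eq, vecEnorm_eq, map_add]; exact norm_add_le _ _

lemma vecEnorm_sum_le {n : ℕ} {ι : Type*} (s : Finset ι) (f : ι → Fin n → ℝ) :
    vecEnorm (∑ i ∈ s, f i) ≤ ∑ i ∈ s, vecEnorm (f i) := by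
  rw [vecEnorm_eq, map_sum]
  refine (norm_sum_le _ _).trans ?_
  exact le_of_eq (Finset.sum_congr rfl fun i _ => (vecEnorm_eq _).symm)

/-- perturbation bound for empirical second-moment matrices:
if `Σᵢ‖x'ᵢ − xᵢ‖² ≤ ε²` and `Σᵢ‖xᵢ‖² ≤ t d`, then
`‖G'_t − G_t‖₂ ≤ ε²/t + 2ε√d/√t`. -/
theorem gram_perturbation {t d : ℕ} (ht : 0 < t)
    (x x' : Fin t → (Fin d → ℝ)) (ε : ℝ) (hε : 0 ≤ ε)
    (hpert : ∑ i, vecEnorm (x' i - x i) ^ 2 ≤ ε ^ 2)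
    (hx : ∑ i, vecEnorm (x i) ^ 2 ≤ (t : ℝ) * d) :
    sNorm ((t : ℝ)⁻¹ • ∑ i, Matrix.vecMulVec (x' i) (x' i)
          - (t : ℝ)⁻¹ • ∑ i, Matrix.vecMulVec (x i) (x i))
      ≤ ε ^ 2 / t + 2 * ε * Real.sqrt d / Real.sqrt t := by
  have ht' : (0:ℝ) < t := by exact_mod_cast ht
  set δ : Fin t → (Fin d → ℝ) := fun i => x' i - x i with hδ
  -- key sum estimates
  have hδsq : ∑ i, vecEnorm (δ i) ^ 2 ≤ ε ^ 2 := hpert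
  have hxsq : ∑ i, vecEnorm (x i) ^ 2 ≤ (t : ℝ) * d := hx
  have hsqrtδ : Real.sqrt (∑ i, vecEnorm (δ i) ^ 2) ≤ ε := by
    calc Real.sqrt (∑ i, vecEnorm (δ i) ^ 2) ≤ Real.sqrt (ε ^ 2) := Real.sqrt_le_sqrt hδsq
    _ = ε := Real.sqrt_sq hε
  have hsqrtx : Real.sqrt (∑ i, vecEnorm (x i) ^ 2) ≤ Real.sqrt ((t:ℝ) * d) :=
    Real.sqrt_le_sqrt hxsq
  have hCS : ∑ i, vecEnorm (δ i) * vecEnorm (x i) ≤ ε * Real.sqrt ((t:ℝ) * d) := by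
    have h1 : (∑ i, vecEnorm (δ i) * vecEnorm (x i)) ^ 2
        ≤ (∑ i, vecEnorm (δ i) ^ 2) * (∑ i, vecEnorm (x i) ^ 2) :=
      Finset.sum_mul_sq_le_sq_mul_sq _ _ _
    have h0 : 0 ≤ ∑ i, vecEnorm (δ i) * vecEnorm (x i) :=
      Finset.sum_nonneg fun i _ => mul_nonneg (vecEnorm_nonneg' _) (vecEnorm_nonneg' _)
    calc ∑ i, vecEnorm (δ i) * vecEnorm (x i)
        = Real.sqrt ((∑ i, vecEnorm (δ i) * vecEnorm (x i)) ^ 2) := (Real.sqrt_sq h0).symm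
      _ ≤ Real.sqrt ((∑ i, vecEnorm (δ i) ^ 2) * (∑ i, vecEnorm (x i) ^ 2)) :=
          Real.sqrt_le_sqrt h1
      _ = Real.sqrt (∑ i, vecEnorm (δ i) ^ 2) * Real.sqrt (∑ i, vecEnorm (x i) ^ 2) :=
          Real.sqrt_mul (Finset.sum_nonneg fun i _ => sq_nonneg _) _
      _ ≤ ε * Real.sqrt ((t:ℝ) * d) := by
          apply mul_le_mul hsqrtδ hsqrtx (Real.sqrt_nonneg _) hε
  -- per unit vector bound
  have key : ∀ v : Fin d → ℝ, vecEnorm v = 1 →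
      vecEnorm ((((t : ℝ)⁻¹ • ∑ i, Matrix.vecMulVec (x' i) (x' i)
          - (t : ℝ)⁻¹ • ∑ i, Matrix.vecMulVec (x i) (x i))).mulVec v)
        ≤ (t:ℝ)⁻¹ * (ε ^ 2 + 2 * (ε * Real.sqrt ((t:ℝ) * d))) := by
    intro v hv
    have hMv : (((t : ℝ)⁻¹ • ∑ i, Matrix.vecMulVec (x' i) (x' i)
          - (t : ℝ)⁻¹ • ∑ i, Matrix.vecMulVec (x i) (x i))).mulVec v
        = (t:ℝ)⁻¹ • ∑ i, ((∑ j, x' i j * v j) • x' i - (∑ j, x i j * v j) • x i) := by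
      funext k
      simp only [Matrix.mulVec, dotProduct, Matrix.sub_apply, Matrix.smul_apply,
        Matrix.sum_apply, Finset.sum_apply, Matrix.vecMulVec_apply, Pi.smul_apply, Pi.sub_apply,
        smul_eq_mul, Finset.sum_sub_distrib, sub_mul, Finset.sum_mul, Finset.mul_sum, mul_sub]
      rw [Finset.sum_comm (γ := Fin d), Finset.sum_comm (γ := Fin d)]
      congr 1 <;> exact Finset.sum_congr rfl fun i _ => Finset.sum_congr rfl fun j _ => by ring
    -- decompose each term
    have hterm : ∀ i, (∑ j, x' i j * v j) • x' i - (∑ j, x i j * v j) • x i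
        = (∑ j, δ i j * v j) • x i + (∑ j, x i j * v j) • δ i + (∑ j, δ i j * v j) • δ i := by
      intro i
      have hx' : x' i = x i + δ i := by simp [hδ]
      have hs : (∑ j, x' i j * v j) = (∑ j, x i j * v j) + (∑ j, δ i j * v j) := by
        rw [hx', ← Finset.sum_add_distrib]
        exact Finset.sum_congr rfl fun j _ => by simp [add_mul]
      rw [hs, hx']
      funext k
      simp only [Pi.add_apply, Pi.sub_apply, Pi.smul_apply, smul_eq_mul]
      ring
    have hbound : ∀ i, vecEnorm ((∑ j, x' i j * v j) • x' i - (∑ j, x i j * v j) • x i)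
        ≤ 2 * (vecEnorm (δ i) * vecEnorm (x i)) + vecEnorm (δ i) ^ 2 := by
      intro i
      rw [hterm i]
      have hcsδ : |∑ j, δ i j * v j| ≤ vecEnorm (δ i) := by
        have := vecEnorm_cs (δ i) v; rwa [hv, mul_one] at this
      have hcsx : |∑ j, x i j * v j| ≤ vecEnorm (x i) := by
        have := vecEnorm_cs (x i) v; rwa [hv, mul_one] at this
      calc vecEnorm ((∑ j, δ i j * v j) • x i + (∑ j, x i j * v j) • δ i + (∑ j, δ i j * v j) • δ i)
          ≤ vecEnorm ((∑ j, δ i j * v j) • x i) + vecEnorm ((∑ j, x i j * v j) • δ i)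
            + vecEnorm ((∑ j, δ i j * v j) • δ i) :=
            (vecEnorm_add_le _ _).trans (by gcongr; exact vecEnorm_add_le _ _)
        _ = |∑ j, δ i j * v j| * vecEnorm (x i) + |∑ j, x i j * v j| * vecEnorm (δ i)
            + |∑ j, δ i j * v j| * vecEnorm (δ i) := by rw [vecEnorm_smul', vecEnorm_smul', vecEnorm_smul']
        _ ≤ vecEnorm (δ i) * vecEnorm (x i) + vecEnorm (x i) * vecEnorm (δ i)
            + vecEnorm (δ i) * vecEnorm (δ i) := by
            gcongr <;> first | exact hcsδ | exact hcsx | exact vecEnorm_nonneg' _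
        _ = 2 * (vecEnorm (δ i) * vecEnorm (x i)) + vecEnorm (δ i) ^ 2 := by ring
    rw [hMv, vecEnorm_smul', abs_inv, abs_of_nonneg (le_of_lt ht')]
    have hsum : vecEnorm (∑ i, ((∑ j, x' i j * v j) • x' i - (∑ j, x i j * v j) • x i))
        ≤ ε ^ 2 + 2 * (ε * Real.sqrt ((t:ℝ) * d)) := by
      calc vecEnorm (∑ i, ((∑ j, x' i j * v j) • x' i - (∑ j, x i j * v j) • x i))
          ≤ ∑ i, vecEnorm ((∑ j, x' i j * v j) • x' i - (∑ j, x i j * v j) • x i) :=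
            vecEnorm_sum_le _ _
        _ ≤ ∑ i, (2 * (vecEnorm (δ i) * vecEnorm (x i)) + vecEnorm (δ i) ^ 2) :=
            Finset.sum_le_sum fun i _ => hbound i
        _ = 2 * (∑ i, vecEnorm (δ i) * vecEnorm (x i)) + ∑ i, vecEnorm (δ i) ^ 2 := by
            rw [Finset.sum_add_distrib, Finset.mul_sum]
        _ ≤ 2 * (ε * Real.sqrt ((t:ℝ) * d)) + ε ^ 2 :=
            add_le_add (by linarith [hCS]) hδsq
        _ = ε ^ 2 + 2 * (ε * Real.sqrt ((t:ℝ) * d)) := by ring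
    exact mul_le_mul_of_nonneg_left hsum (by positivity)
  have harith : (t:ℝ)⁻¹ * (ε ^ 2 + 2 * (ε * Real.sqrt ((t:ℝ) * d)))
      = ε ^ 2 / t + 2 * ε * Real.sqrt d / Real.sqrt t := by
    have hst : Real.sqrt ((t:ℝ) * d) = Real.sqrt t * Real.sqrt d :=
      Real.sqrt_mul (le_of_lt ht') _
    have htt : (t:ℝ) = Real.sqrt t * Real.sqrt t := (Real.mul_self_sqrt (le_of_lt ht')).symm
    have hs0 : Real.sqrt (t:ℝ) ≠ 0 := by positivity
    have h1 : (t:ℝ)⁻¹ * Real.sqrt t = (Real.sqrt t)⁻¹ := by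
      rw [inv_mul_eq_div, Real.sqrt_div_self', one_div]
    calc (t:ℝ)⁻¹ * (ε ^ 2 + 2 * (ε * Real.sqrt ((t:ℝ) * d)))
        = ε ^ 2 / t + 2 * ε * Real.sqrt d * ((t:ℝ)⁻¹ * Real.sqrt t) := by
          rw [hst]; ring
      _ = ε ^ 2 / t + 2 * ε * Real.sqrt d / Real.sqrt t := by
          rw [h1]; ring
  apply Real.iSup_le
  · rintro ⟨v, hv⟩
    exact (key v hv).trans (le_of_eq harith)
  · positivity
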